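/- A function f between metric spaces (X,d) and (Y,ρ) is CC-regular if and only if it is almost bounded. -/

import Mathlib

open Metric Filter

/-- A sequence is cofinally Cauchy if for every ε>0 there is an infinite index set
on which all pairwise distances are < ε. -/
def CofinallyCauchy {X : Type*} [MetricSpace X] (x : ℕ → X) : Prop :=
  ∀ ε > 0, ∃ N : Set ℕ, N.Infinite ∧ ∀ n ∈ N, ∀ j ∈ N, dist (x n) (x j) < ε

/-- A function is almost bounded if for every ε>0 there is δ>0 such that the image of
every set of diameter < δ is contained in a finite union of open ε-balls. -/
def AlmostBounded {X Y : Type*} [MetricSpace X] [MetricSpace Y] (f : X → Y) : Prop :=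
  ∀ ε > 0, ∃ δ > 0, ∀ A : Set X, EMetric.diam A < ENNReal.ofReal δ →
    ∃ B : Finset Y, f '' A ⊆ ⋃ b ∈ B, Metric.ball b ε

/-- A metric space is cofinally complete if every cofinally Cauchy sequence clusters. -/
def CofinallyComplete (X : Type*) [MetricSpace X] : Prop :=
  ∀ x : ℕ → X, CofinallyCauchy x → ∃ p : X, MapClusterPt p atTop x

/-- The local total boundedness functional. -/
noncomputable def tFun {X : Type*} [MetricSpace X] (x : X) : ℝ :=
  sSup {ε : ℝ | 0 < ε ∧ TotallyBounded (Metric.ball x ε)}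

/-- A function between metric spaces is CC-regular iff it is almost bounded. -/
theorem ccRegular_iff_almostBounded {X Y : Type*} [MetricSpace X] [MetricSpace Y]
    (f : X → Y) :
    (∀ x : ℕ → X, CofinallyCauchy x → CofinallyCauchy (fun n => f (x n))) ↔
      AlmostBounded f := by
  constructor
  · -- CC-regular → almost bounded
    intro hreg
    classical
    by_contra hAB
    unfold AlmostBounded at hAB
    push_neg at hAB
    obtain ⟨ε, hε, hbad⟩ := hAB
    have hA : ∀ n : ℕ, ∃ A : Set X, EMetric.diam A < ENNReal.ofReal (1 / (n + 1)) ∧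
        ∀ B : Finset Y, ¬ f '' A ⊆ ⋃ b ∈ B, Metric.ball b ε := by
      intro n
      exact hbad (1 / (n + 1)) (by positivity)
    choose A hAdiam hAcov using hA
    have key : ∀ n (F : Finset Y), ∃ a, a ∈ A n ∧ ∀ y ∈ F, ε ≤ dist (f a) y := by
      intro n F
      by_contra h
      push_neg at h
      apply hAcov n F
      rintro y ⟨a, ha, rfl⟩
      obtain ⟨z, hz, hlt⟩ := h a ha
      exact Set.mem_biUnion hz (by simpa [Metric.mem_ball, dist_comm] using hlt)
    choose a haA hasep using key
    set g : ℕ → ℕ := fun m => (Nat.unpair m).1 with hg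
    set L : ℕ → List X :=
      fun m => Nat.rec [] (fun m prev => prev ++ [a (g m) ((prev.map f).toFinset)]) m with hL
    set x : ℕ → X := fun m => a (g m) (((L m).map f).toFinset) with hx
    have hLsucc : ∀ m, L (m + 1) = L m ++ [x m] := fun m => rfl
    have hmemL : ∀ m j, j < m → x j ∈ L m := by
      intro m
      induction m with
      | zero => intro j hj; omega
      | succ m ih =>
        intro j hj
        rw [hLsucc]
        rcases Nat.lt_succ_iff_lt_or_eq.mp hj with h | h
        · exact List.mem_append_left _ (ih j h)
        · subst h; simp
    have hxA : ∀ m, x m ∈ A (g m) := fun m => haA _ _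
    have hsep : ∀ j m, j < m → ε ≤ dist (f (x m)) (f (x j)) := by
      intro j m hj
      apply hasep
      simp only [List.mem_toFinset, List.mem_map]
      exact ⟨x j, hmemL m j hj, rfl⟩
    have hcc : CofinallyCauchy x := by
      intro ε' hε'
      obtain ⟨n, hn⟩ := exists_nat_gt (1 / ε')
      refine ⟨{m | g m = n}, ?_, ?_⟩
      · apply Set.infinite_of_injective_forall_mem (f := fun k : ℕ => Nat.pair n k)
        · intro k1 k2 h
          have := congrArg (fun t => (Nat.unpair t).2) h
          simpa [Nat.unpair_pair] using this
        · intro k; simp [hg, Nat.unpair_pair]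
      · intro m hm j hj
        have h1 : x m ∈ A n := hm ▸ hxA m
        have h2 : x j ∈ A n := hj ▸ hxA j
        have hle := EMetric.edist_le_diam_of_mem h1 h2
        have hlt : edist (x m) (x j) < ENNReal.ofReal (1 / (n + 1)) :=
          lt_of_le_of_lt hle (hAdiam n)
        have hd : dist (x m) (x j) < 1 / (n + 1) := by rwa [edist_lt_ofReal] at hlt
        have h1e : (1 : ℝ) / (n + 1) < ε' := by
          have hn' : 1 / ε' < (n : ℝ) + 1 := by linarith
          rw [div_lt_iff₀ hε'] at hn'
          rw [div_lt_iff₀ (by positivity)]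
          rw [mul_comm]
          exact hn'
        linarith
    obtain ⟨N, hNinf, hNd⟩ := hreg x hcc ε hε
    obtain ⟨m, hm, j, hj, hne⟩ := hNinf.nontrivial
    rcases hne.lt_or_gt with h | h
    · exact absurd (hNd j hj m hm) (not_lt.mpr (hsep m j h))
    · exact absurd (hNd m hm j hj) (not_lt.mpr (hsep j m h))
  · -- almost bounded → CC-regular
    intro hAB x hx ε hε
    obtain ⟨δ, hδ, hcov⟩ := hAB (ε / 2) (by positivity)
    obtain ⟨N, hNinf, hNd⟩ := hx (δ / 2) (by positivity)
    have hdiam : EMetric.diam (x '' N) < ENNReal.ofReal δ := by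
      refine lt_of_le_of_lt (b := ENNReal.ofReal (δ / 2)) (EMetric.diam_le ?_) ?_
      · rintro p ⟨n, hn, rfl⟩ q ⟨j, hj, rfl⟩
        exact (edist_le_ofReal (by positivity)).mpr (hNd n hn j hj).le
      · exact (ENNReal.ofReal_lt_ofReal_iff hδ).mpr (by linarith)
    obtain ⟨B, hB⟩ := hcov (x '' N) hdiam
    have hpig : ∃ b ∈ B, {n | n ∈ N ∧ f (x n) ∈ ball b (ε / 2)}.Infinite := by
      by_contra h
      push_neg at h
      have hsub : N ⊆ ⋃ b ∈ B, {n | n ∈ N ∧ f (x n) ∈ ball b (ε / 2)} := by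
        intro n hn
        have hmem : f (x n) ∈ ⋃ b ∈ B, ball b (ε / 2) := hB ⟨x n, ⟨n, hn, rfl⟩, rfl⟩
        obtain ⟨b, hb, hbm⟩ := Set.mem_iUnion₂.mp hmem
        exact Set.mem_biUnion hb ⟨hn, hbm⟩
      exact hNinf ((Set.Finite.biUnion B.finite_toSet
        (fun b hb => h b hb)).subset hsub)
    obtain ⟨b, _, hinf⟩ := hpig
    refine ⟨_, hinf, ?_⟩
    rintro n ⟨_, hnb⟩ j ⟨_, hjb⟩
    rw [Metric.mem_ball] at hnb hjb
    calc dist (f (x n)) (f (x j)) ≤ dist (f (x n)) b + dist b (f (x j)) := dist_triangle _ _ _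
      _ < ε / 2 + ε / 2 := by rw [dist_comm b]; exact add_lt_add hnb hjb
      _ = ε := by ring
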